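/- Let A and B be commutative Noetherian algebras over a ring V, and let K be a field containing V such that we may form A_K = A ⊗ K and B_K = B ⊗ K. If A_K → B_K is faithfully flat and M is a finitely generated A_K-module such that B_K ⊗_{A_K} M is a projective B_K-module, then M is a projective A_K-module. -/

import Mathlib

open TensorProduct

/-- Descent of flatness: if `S ⊗[R] M` is flat as an `R`-module and `S` is faithfully flat
over `R`, then `M` is flat over `R`. -/
lemma flat_of_faithfullyFlat_base (R S M : Type) [CommRing R] [CommRing S] [Algebra R S]
    [Module.FaithfullyFlat R S] [AddCommGroup M] [Module R M]
    [Module.Flat R (S ⊗[R] M)] : Module.Flat R M := by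
  rw [Module.Flat.iff_lTensor_preserves_injective_linearMap]
  intro N N' _ _ _ _ f hf
  set g := f.lTensor M with hg
  -- `S ⊗ g` is injective, since `S ⊗ M` is flat over `R`.
  have h2 : Function.Injective (g.lTensor S) := by
    have hinj : Function.Injective (f.lTensor (S ⊗[R] M)) :=
      Module.Flat.lTensor_preserves_injective_linearMap f hf
    have hcomm : g.lTensor S =
        (TensorProduct.assoc R S M N').toLinearMap ∘ₗ
          (f.lTensor (S ⊗[R] M)) ∘ₗ (TensorProduct.assoc R S M N).symm.toLinearMap := by
      ext s m n
      simp [hg]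
    rw [hcomm]
    simp only [LinearMap.coe_comp, LinearEquiv.coe_coe]
    exact (TensorProduct.assoc R S M N').injective.comp
      (hinj.comp (TensorProduct.assoc R S M N).symm.injective)
  -- the kernel of `g` becomes trivial after tensoring with `S`
  set K := LinearMap.ker g with hK
  have hKz : ∀ x : S ⊗[R] K, x = 0 := by
    intro x
    have hι : Function.Injective (K.subtype.lTensor S) :=
      Module.Flat.lTensor_preserves_injective_linearMap _ (Submodule.injective_subtype K)
    have h0 : g.lTensor S (K.subtype.lTensor S x) = 0 := by
      rw [← LinearMap.comp_apply, ← LinearMap.lTensor_comp, LinearMap.comp_ker_subtype,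
        LinearMap.lTensor_zero, LinearMap.zero_apply]
    have := h2 (by rw [h0, map_zero] : g.lTensor S (K.subtype.lTensor S x) = g.lTensor S 0)
    exact hι (by simpa using this)
  haveI : Subsingleton (S ⊗[R] K) := ⟨fun a b => by rw [hKz a, hKz b]⟩
  haveI : Subsingleton K := Module.FaithfullyFlat.lTensor_reflects_triviality R S K
  rw [← LinearMap.ker_eq_bot]
  exact Submodule.eq_bot_of_subsingleton

/-- A finitely presented flat module is projective. -/
lemma projective_of_fp_flat (R M : Type) [CommRing R] [AddCommGroup M] [Module R M]
    [Module.FinitePresentation R M] [Module.Flat R M] : Module.Projective R M := by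
  apply Module.projective_of_localization_maximal
  intro I hI
  haveI : Module.Free (Localization.AtPrime I) (LocalizedModule I.primeCompl M) :=
    Module.free_of_flat_of_isLocalRing
  infer_instance

/-- Let `A` and `B` be commutative Noetherian algebras over a ring `V`, and `K` a field
containing `V`, forming `A_K = A ⊗ K`, `B_K = B ⊗ K`.  If `A_K → B_K` is faithfully flat and
`M` is a finitely generated `A_K`-module such that `B_K ⊗ M` is projective over `B_K`, then
`M` is projective over `A_K`. -/
theorem stmt_0 (V K A B : Type) [CommRing V] [Field K] [Algebra V K]
    [CommRing A] [CommRing B] [Algebra V A] [Algebra V B]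
    [IsNoetherianRing (A ⊗[V] K)] [IsNoetherianRing (B ⊗[V] K)]
    [Algebra (A ⊗[V] K) (B ⊗[V] K)]
    [Module.FaithfullyFlat (A ⊗[V] K) (B ⊗[V] K)]
    (M : Type) [AddCommGroup M] [Module (A ⊗[V] K) M]
    [Module.Finite (A ⊗[V] K) M]
    (h : Module.Projective (B ⊗[V] K) ((B ⊗[V] K) ⊗[A ⊗[V] K] M)) :
    Module.Projective (A ⊗[V] K) M := by
  haveI : Module.FinitePresentation (A ⊗[V] K) M :=
    Module.finitePresentation_of_finite _ _
  haveI : Module.Flat (B ⊗[V] K) ((B ⊗[V] K) ⊗[A ⊗[V] K] M) := Module.Flat.of_projective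
  haveI : Module.Flat (A ⊗[V] K) ((B ⊗[V] K) ⊗[A ⊗[V] K] M) :=
    Module.Flat.trans (A ⊗[V] K) (B ⊗[V] K) ((B ⊗[V] K) ⊗[A ⊗[V] K] M)
  haveI : Module.Flat (A ⊗[V] K) M :=
    flat_of_faithfullyFlat_base (A ⊗[V] K) (B ⊗[V] K) M
  exact projective_of_fp_flat _ _
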